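/- Fix an integer γ ≥ 1 and a real number h. Let C(h) be the γ×γ matrix with entries c_{αβ}(h) = h^{2γ−α−β−1}/((2γ−α−β−1)·(γ−α−1)!·(γ−β−1)!) for 0 ≤ α, β ≤ γ−1. Then det C(h) = h^{γ²} · Π_{α=0}^{γ−1} (α! / (γ+α)!). In particular C(h) is invertible for every h ≠ 0. -/

import Mathlib

open Matrix Finset Nat

/-- The upper triangular matrix `A(h)` with entries `h^(β-α)/(β-α)!` for `α ≤ β`. -/
noncomputable def matA (γ : ℕ) (h : ℝ) : Matrix (Fin γ) (Fin γ) ℝ :=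
  fun α β =>
    if (α : ℕ) ≤ (β : ℕ) then h ^ ((β : ℕ) - (α : ℕ)) / (((β : ℕ) - (α : ℕ)).factorial : ℝ)
    else 0

/-- The matrix `B(h)` with entries `h^(2γ-α-β-1)/(2γ-α-β-1)!`. -/
noncomputable def matB (γ : ℕ) (h : ℝ) : Matrix (Fin γ) (Fin γ) ℝ :=
  fun α β =>
    h ^ (2 * γ - (α : ℕ) - (β : ℕ) - 1) / ((2 * γ - (α : ℕ) - (β : ℕ) - 1).factorial : ℝ)

/-- The matrix `C(h)` with entries `h^(2γ-α-β-1)/((2γ-α-β-1)·(γ-α-1)!·(γ-β-1)!)`. -/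
noncomputable def matC (γ : ℕ) (h : ℝ) : Matrix (Fin γ) (Fin γ) ℝ :=
  fun α β =>
    h ^ (2 * γ - (α : ℕ) - (β : ℕ) - 1) /
      (((2 * γ - (α : ℕ) - (β : ℕ) - 1) * (γ - (α : ℕ) - 1).factorial *
          (γ - (β : ℕ) - 1).factorial : ℕ) : ℝ)

/-- The diagonal matrix `D` with entries `(-1)^(γ-α-1)`. -/
noncomputable def matD (γ : ℕ) : Matrix (Fin γ) (Fin γ) ℝ :=
  Matrix.diagonal fun α : Fin γ => (-1 : ℝ) ^ (γ - (α : ℕ) - 1)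

/-- The lower triangular matrix `L(h)` from the LU decomposition of `C(h)`. -/
noncomputable def matL (γ : ℕ) (h : ℝ) : Matrix (Fin γ) (Fin γ) ℝ :=
  fun α β =>
    if (β : ℕ) ≤ (α : ℕ) then
      h ^ ((β : ℤ) - (α : ℤ)) *
        (((α : ℕ).factorial * (2 * γ - (β : ℕ) - 1).factorial * (γ - (β : ℕ) - 1).factorial *
            (2 * γ - (α : ℕ) - (β : ℕ) - 2).factorial : ℕ) : ℝ) /
        (((β : ℕ).factorial * ((α : ℕ) - (β : ℕ)).factorial * (2 * γ - (α : ℕ) - 1).factorial *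
            (γ - (α : ℕ) - 1).factorial * (2 * γ - 2 * (β : ℕ) - 2).factorial : ℕ) : ℝ)
    else 0

/-- The upper triangular matrix `U(h)` from the LU decomposition of `C(h)`. -/
noncomputable def matU (γ : ℕ) (h : ℝ) : Matrix (Fin γ) (Fin γ) ℝ :=
  fun α β =>
    if (α : ℕ) ≤ (β : ℕ) then
      h ^ (2 * γ - (α : ℕ) - (β : ℕ) - 1) *
        (((α : ℕ).factorial * (β : ℕ).factorial * (2 * γ - 2 * (α : ℕ) - 1).factorial *
            (2 * γ - (α : ℕ) - (β : ℕ) - 2).factorial : ℕ) : ℝ) /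
        ((((β : ℕ) - (α : ℕ)).factorial * (2 * γ - (α : ℕ) - 1).factorial *
            (2 * γ - (β : ℕ) - 1).factorial * (γ - (α : ℕ) - 1).factorial *
            (γ - (β : ℕ) - 1).factorial : ℕ) : ℝ)
    else 0

/-- The diagonal matrix `D̂(h)` of diagonal entries of `U(h)`. -/
noncomputable def matDhat (γ : ℕ) (h : ℝ) : Matrix (Fin γ) (Fin γ) ℝ :=
  Matrix.diagonal fun α : Fin γ =>
    h ^ (2 * γ - 2 * (α : ℕ) - 1) *
      (((α : ℕ).factorial ^ 2 * (2 * γ - 2 * (α : ℕ) - 2).factorial *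
          (2 * γ - 2 * (α : ℕ) - 1).factorial : ℕ) : ℝ) /
      ((((γ - (α : ℕ) - 1).factorial) ^ 2 * ((2 * γ - (α : ℕ) - 1).factorial) ^ 2 : ℕ) : ℝ)

lemma my_schur {n : ℕ} (M : Matrix (Fin (n+1)) (Fin (n+1)) ℝ) (h0 : M 0 0 ≠ 0) :
    M.det = M 0 0 *
      (Matrix.of fun i j : Fin n =>
        M i.succ j.succ - M i.succ 0 * M 0 j.succ / M 0 0).det := by
  set L : Matrix (Fin (n+1)) (Fin (n+1)) ℝ :=
    Matrix.of (fun i j => if j = 0 then M i 0 / M 0 0 else if i = j then 1 else 0) with hL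
  set M' : Matrix (Fin (n+1)) (Fin (n+1)) ℝ :=
    Matrix.of (fun i j => if i = 0 then M 0 j else M i j - M i 0 * M 0 j / M 0 0) with hM'
  have hLM : M = L * M' := by
    ext i j
    rw [Matrix.mul_apply, Fin.sum_univ_succ]
    induction i using Fin.cases with
    | zero =>
      simp [hL, hM', Fin.succ_ne_zero, div_self h0]
      exact Finset.sum_eq_zero fun x _ => if_neg (Ne.symm (Fin.succ_ne_zero x))
    | succ i =>
      have key : ∀ k : Fin n, (L i.succ k.succ * M' k.succ j)
          = if k = i then M' i.succ j else 0 := by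
        intro k
        simp only [hL, Matrix.of_apply, Fin.succ_ne_zero, if_false]
        by_cases hk : k = i
        · simp [hk]
        · have h2 : ¬ (i.succ = k.succ) := by
            simpa [Fin.succ_inj] using fun hh => hk hh.symm
          simp [h2, hk]
      rw [Finset.sum_congr rfl (fun k _ => key k), Finset.sum_ite_eq' Finset.univ i]
      simp only [Finset.mem_univ, if_true, hL, hM', Matrix.of_apply, if_pos rfl,
        Fin.succ_ne_zero, if_false]
      field_simp
      ring
  have hLdet : L.det = 1 := by
    have ht : L.BlockTriangular OrderDual.toDual := by
      intro i j hij
      have hji : i < j := hij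
      have hj0 : j ≠ 0 := (lt_of_le_of_lt (Fin.zero_le _) hji).ne'
      simp [hL, hj0, hji.ne]
    rw [Matrix.det_of_lowerTriangular L ht]
    have hd : ∀ i : Fin (n+1), L i i = 1 := by
      intro i
      by_cases hi : i = 0
      · simp [hL, hi, div_self h0]
      · simp [hL, hi]
    simp [hd]
  have hM'det : M'.det = M 0 0 *
      (Matrix.of fun i j : Fin n =>
        M i.succ j.succ - M i.succ 0 * M 0 j.succ / M 0 0).det := by
    rw [Matrix.det_succ_column_zero]
    have hzero : ∀ i : Fin n, M' i.succ 0 = 0 := by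
      intro i
      simp only [hM', Matrix.of_apply, Fin.succ_ne_zero, if_false]
      field_simp
      ring
    rw [Fin.sum_univ_succ]
    simp only [hzero, mul_zero, zero_mul, Finset.sum_const_zero, add_zero]
    simp only [Fin.val_zero, pow_zero, one_mul, Fin.succAbove_zero]
    have e1 : M' 0 0 = M 0 0 := by simp [hM']
    have e2 : M'.submatrix Fin.succ Fin.succ
        = (Matrix.of fun i j : Fin n =>
            M i.succ j.succ - M i.succ 0 * M 0 j.succ / M 0 0) := by
      ext i j
      simp [hM', Matrix.submatrix_apply, Fin.succ_ne_zero]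
    rw [e1, e2]
  have hdd : M.det = M'.det := by rw [hLM, Matrix.det_mul, hLdet, one_mul]
  rw [hdd, hM'det]
lemma my_cauchy : ∀ (n : ℕ) (x y : ℕ → ℝ), (∀ i < n, ∀ j < n, x i + y j ≠ 0) →
    (Matrix.of fun i j : Fin n => 1 / (x i + y j)).det
      = (∏ j ∈ Finset.range n, ∏ i ∈ Finset.range j, ((x j - x i) * (y j - y i)))
        / ∏ i ∈ Finset.range n, ∏ j ∈ Finset.range n, (x i + y j) := by
  intro n
  induction n with
  | zero => intro x y _; simp [Matrix.det_fin_zero]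
  | succ n ih =>
    intro x y hxy
    have h00 : x 0 + y 0 ≠ 0 := hxy 0 (Nat.succ_pos n) 0 (Nat.succ_pos n)
    have hM00 : (Matrix.of fun i j : Fin (n+1) => 1 / (x i + y j)) 0 0 ≠ 0 := by
      simpa using one_div_ne_zero h00
    rw [my_schur _ hM00]
    have hne : ∀ i j : Fin n, x (i+1 : ℕ) + y (j+1 : ℕ) ≠ 0 := fun i j =>
      hxy _ (by omega) _ (by omega)
    have hne1 : ∀ i : Fin n, x (i+1 : ℕ) + y 0 ≠ 0 := fun i =>
      hxy _ (by omega) 0 (Nat.succ_pos n)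
    have hne2 : ∀ j : Fin n, x 0 + y (j+1 : ℕ) ≠ 0 := fun j =>
      hxy 0 (Nat.succ_pos n) _ (by omega)
    have hS : (Matrix.of fun i j : Fin n =>
        (Matrix.of fun i j : Fin (n+1) => 1 / (x i + y j)) i.succ j.succ
          - (Matrix.of fun i j : Fin (n+1) => 1 / (x i + y j)) i.succ 0
            * (Matrix.of fun i j : Fin (n+1) => 1 / (x i + y j)) 0 j.succ
            / (Matrix.of fun i j : Fin (n+1) => 1 / (x i + y j)) 0 0)
        = Matrix.diagonal (fun i : Fin n => (x (i+1 : ℕ) - x 0) / (x (i+1 : ℕ) + y 0))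
          * (Matrix.of fun i j : Fin n => 1 / (x (i+1 : ℕ) + y (j+1 : ℕ)))
          * Matrix.diagonal (fun j : Fin n => (y (j+1 : ℕ) - y 0) / (x 0 + y (j+1 : ℕ))) := by
      ext i j
      simp only [Matrix.mul_diagonal, Matrix.diagonal_mul, Matrix.of_apply,
        Fin.val_succ, Fin.val_zero]
      have e1 := hne i j
      have e2 := hne1 i
      have e3 := hne2 j
      field_simp
      ring
    rw [hS, Matrix.det_mul, Matrix.det_mul, Matrix.det_diagonal, Matrix.det_diagonal]
    rw [ih (fun k => x (k+1)) (fun k => y (k+1)) (fun i hi j hj => hxy _ (by omega) _ (by omega))]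
    simp only [Matrix.of_apply, Fin.val_zero]
    rw [Fin.prod_univ_eq_prod_range (fun i => (x (i+1) - x 0) / (x (i+1) + y 0)) n,
        Fin.prod_univ_eq_prod_range (fun j => (y (j+1) - y 0) / (x 0 + y (j+1))) n,
        Finset.prod_div_distrib, Finset.prod_div_distrib]
    rw [Finset.prod_range_succ'
      (fun j => ∏ i ∈ Finset.range j, ((x j - x i) * (y j - y i))) n]
    simp only [Finset.range_zero, Finset.prod_empty, mul_one]
    have hnum : ∀ j, (∏ i ∈ Finset.range (j+1), ((x (j+1) - x i) * (y (j+1) - y i)))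
        = (∏ i ∈ Finset.range j, ((x (j+1) - x (i+1)) * (y (j+1) - y (i+1))))
          * ((x (j+1) - x 0) * (y (j+1) - y 0)) :=
      fun j => Finset.prod_range_succ' _ j
    rw [Finset.prod_congr rfl (fun j _ => hnum j), Finset.prod_mul_distrib,
      Finset.prod_mul_distrib]
    rw [Finset.prod_range_succ' (fun i => ∏ j ∈ Finset.range (n+1), (x i + y j)) n]
    have hden : ∀ i, (∏ j ∈ Finset.range (n+1), (x i + y j))
        = (∏ j ∈ Finset.range n, (x i + y (j+1))) * (x i + y 0) :=
      fun i => Finset.prod_range_succ' _ n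
    rw [hden 0, Finset.prod_congr rfl (fun i (_ : i ∈ Finset.range n) => hden (i+1)),
      Finset.prod_mul_distrib]
    have hQ1 : (∏ i ∈ Finset.range n, (x (i+1) + y 0)) ≠ 0 :=
      Finset.prod_ne_zero_iff.mpr fun i hi =>
        hxy _ (by simpa using Nat.succ_lt_succ (Finset.mem_range.mp hi)) 0 (Nat.succ_pos n)
    have hQ2 : (∏ j ∈ Finset.range n, (x 0 + y (j+1))) ≠ 0 :=
      Finset.prod_ne_zero_iff.mpr fun j hj =>
        hxy 0 (Nat.succ_pos n) _ (by simpa using Nat.succ_lt_succ (Finset.mem_range.mp hj))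
    have hD : (∏ i ∈ Finset.range n, ∏ j ∈ Finset.range n, (x (i+1) + y (j+1))) ≠ 0 :=
      Finset.prod_ne_zero_iff.mpr fun i hi => Finset.prod_ne_zero_iff.mpr fun j hj =>
        hxy _ (by simpa using Nat.succ_lt_succ (Finset.mem_range.mp hi)) _
          (by simpa using Nat.succ_lt_succ (Finset.mem_range.mp hj))
    field_simp

theorem det_matC (γ : ℕ) (hγ : 1 ≤ γ) (h : ℝ) :
    (matC γ h).det = h ^ (γ ^ 2) * ∏ α ∈ Finset.range γ,
        ((α.factorial : ℝ) / ((γ + α).factorial : ℝ)) ∧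
    (h ≠ 0 → IsUnit (matC γ h)) := by
  set x : ℕ → ℝ := fun i => (γ : ℝ) - i - 2⁻¹ with hx
  have hxy : ∀ i < γ, ∀ j < γ, x i + x j = ((2*γ - i - j - 1 : ℕ) : ℝ) := by
    intro i hi j hj
    have e : (2*γ - i - j - 1 : ℕ) = 2*γ - (i+j+1) := by omega
    rw [e, Nat.cast_sub (by omega)]
    simp only [hx]
    push_cast
    ring
  set d : Fin γ → ℝ := fun α => h ^ (γ - (α:ℕ) - 1) / (((γ - (α:ℕ) - 1).factorial : ℕ) : ℝ)
    with hd
  have hdecomp : matC γ h = Matrix.diagonal d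
      * (h • Matrix.of (fun α β : Fin γ => 1 / (x α + x β)))
      * Matrix.diagonal d := by
    ext α β
    have hα : (α:ℕ) < γ := α.isLt
    have hβ : (β:ℕ) < γ := β.isLt
    simp only [Matrix.mul_diagonal, Matrix.diagonal_mul, Matrix.smul_apply, Matrix.of_apply,
      smul_eq_mul, matC, hd]
    rw [hxy _ hα _ hβ]
    have hf1 : (((γ - (α:ℕ) - 1).factorial : ℕ) : ℝ) ≠ 0 :=
      Nat.cast_ne_zero.mpr (Nat.factorial_ne_zero _)
    have hf2 : (((γ - (β:ℕ) - 1).factorial : ℕ) : ℝ) ≠ 0 :=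
      Nat.cast_ne_zero.mpr (Nat.factorial_ne_zero _)
    have hN : ((2*γ - (α:ℕ) - (β:ℕ) - 1 : ℕ) : ℝ) ≠ 0 := Nat.cast_ne_zero.mpr (by omega)
    have hpow : h ^ (γ - (α:ℕ) - 1) * h * h ^ (γ - (β:ℕ) - 1)
        = h ^ (2*γ - (α:ℕ) - (β:ℕ) - 1) := by
      rw [← pow_succ, ← pow_add]
      congr 1
      omega
    rw [show (h ^ (γ - (α:ℕ) - 1) / (((γ - (α:ℕ) - 1).factorial : ℕ) : ℝ))
          * (h * (1 / ((2*γ - (α:ℕ) - (β:ℕ) - 1 : ℕ) : ℝ)))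
          * (h ^ (γ - (β:ℕ) - 1) / (((γ - (β:ℕ) - 1).factorial : ℕ) : ℝ))
        = (h ^ (γ - (α:ℕ) - 1) * h * h ^ (γ - (β:ℕ) - 1))
          / (((2*γ - (α:ℕ) - (β:ℕ) - 1 : ℕ) : ℝ)
            * (((γ - (α:ℕ) - 1).factorial : ℕ) : ℝ)
            * (((γ - (β:ℕ) - 1).factorial : ℕ) : ℝ)) from by field_simp, hpow]
    congr 1
    push_cast
    ring
  have hdet : (matC γ h).det = h ^ (γ ^ 2) * ∏ α ∈ Finset.range γ,
      ((α.factorial : ℝ) / ((γ + α).factorial : ℝ)) := by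
    rw [hdecomp]
    simp only [Matrix.det_mul, Matrix.det_diagonal, Matrix.det_smul, Fintype.card_fin]
    rw [my_cauchy γ x x (fun i hi j hj => by
        rw [hxy i hi j hj]; exact Nat.cast_ne_zero.mpr (by omega))]
    have hNum : (∏ j ∈ Finset.range γ, ∏ i ∈ Finset.range j, (x j - x i) * (x j - x i))
        = ∏ j ∈ Finset.range γ, ((j.factorial : ℕ) : ℝ) ^ 2 := by
      refine Finset.prod_congr rfl fun j _ => ?_
      have inner : ∀ i ∈ Finset.range j, (x j - x i) * (x j - x i) = (((j - i : ℕ) : ℝ))^2 := by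
        intro i hi
        have hij : i < j := Finset.mem_range.mp hi
        have e : x j - x i = -(((j - i : ℕ) : ℝ)) := by
          rw [Nat.cast_sub hij.le]; simp only [hx]; ring
        rw [e]; ring
      rw [Finset.prod_congr rfl inner, Finset.prod_pow, ← Nat.cast_prod]
      congr 2
      rw [← Finset.prod_range_reflect (fun i => j - i) j,
        ← Finset.prod_range_add_one_eq_factorial j]
      exact Finset.prod_congr rfl fun i hi =>
        (by have := Finset.mem_range.mp hi; omega)
    have hDen : (∏ i ∈ Finset.range γ, ∏ j ∈ Finset.range γ, (x i + x j))
        = ∏ i ∈ Finset.range γ,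
            ((((2*γ - i - 1).factorial : ℕ) : ℝ) / (((γ - i - 1).factorial : ℕ) : ℝ)) := by
      refine Finset.prod_congr rfl fun i hi => ?_
      have hiγ : i < γ := Finset.mem_range.mp hi
      have inner : ∀ j ∈ Finset.range γ, x i + x j = (((2*γ - i - 1) - j : ℕ) : ℝ) := by
        intro j hj
        rw [hxy i hiγ j (Finset.mem_range.mp hj)]
        congr 1
        omega
      rw [Finset.prod_congr rfl inner, ← Nat.cast_prod, ← Nat.descFactorial_eq_prod_range]
      have hfd : ((γ - i - 1).factorial) * ((2*γ - i - 1).descFactorial γ)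
          = (2*γ - i - 1).factorial := by
        have hkn : γ ≤ 2*γ - i - 1 := by omega
        have := Nat.factorial_mul_descFactorial hkn
        rwa [show 2*γ - i - 1 - γ = γ - i - 1 from by omega] at this
      rw [eq_div_iff (Nat.cast_ne_zero.mpr (Nat.factorial_ne_zero _))]
      exact_mod_cast congrArg (Nat.cast : ℕ → ℝ) (by rw [mul_comm]; exact hfd)
    have hdprod : (∏ i : Fin γ, d i)
        = h ^ (∑ α ∈ Finset.range γ, (γ - α - 1))
          / ∏ α ∈ Finset.range γ, (((γ - α - 1).factorial : ℕ) : ℝ) := by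
      have e0 : (∏ i : Fin γ, d i) = ∏ α ∈ Finset.range γ,
          (h ^ (γ - α - 1) / (((γ - α - 1).factorial : ℕ) : ℝ)) :=
        Fin.prod_univ_eq_prod_range
          (fun α : ℕ => h ^ (γ - α - 1) / (((γ - α - 1).factorial : ℕ) : ℝ)) γ
      rw [e0, Finset.prod_div_distrib, Finset.prod_pow_eq_pow_sum]
    have hF : (∏ i ∈ Finset.range γ, (((γ - i - 1).factorial : ℕ) : ℝ))
        = ∏ α ∈ Finset.range γ, ((α.factorial : ℕ) : ℝ) := by
      rw [← Finset.prod_range_reflect (fun α => ((α.factorial : ℕ) : ℝ)) γ]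
      refine Finset.prod_congr rfl fun i hi => ?_
      rw [show γ - 1 - i = γ - i - 1 from by omega]
    have hG : (∏ i ∈ Finset.range γ, (((2*γ - i - 1).factorial : ℕ) : ℝ))
        = ∏ α ∈ Finset.range γ, (((γ + α).factorial : ℕ) : ℝ) := by
      rw [← Finset.prod_range_reflect (fun α => (((γ + α).factorial : ℕ) : ℝ)) γ]
      refine Finset.prod_congr rfl fun i hi => ?_
      have : i < γ := Finset.mem_range.mp hi
      rw [show γ + (γ - 1 - i) = 2*γ - i - 1 from by omega]
    have hSum : (∑ α ∈ Finset.range γ, (γ - α - 1)) = ∑ α ∈ Finset.range γ, α := by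
      rw [← Finset.sum_range_reflect (fun α => α) γ]
      exact Finset.sum_congr rfl fun i hi => by omega
    set S := ∑ α ∈ Finset.range γ, α with hSdef
    have hS2 : S * 2 = γ * (γ - 1) := Finset.sum_range_id_mul_two γ
    have h1 : γ * (γ - 1) + γ = γ * γ := by
      obtain ⟨k, hk⟩ : ∃ k, γ = k + 1 := ⟨γ - 1, by omega⟩
      subst hk
      simp [Nat.succ_sub_one]
      ring
    have hγ2 : γ ^ 2 = S + S + γ := by rw [pow_two, ← h1, ← hS2]; ring
    set F := ∏ α ∈ Finset.range γ, ((α.factorial : ℕ) : ℝ) with hFdef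
    set G := ∏ α ∈ Finset.range γ, (((γ + α).factorial : ℕ) : ℝ) with hGdef
    have hFne : F ≠ 0 := Finset.prod_ne_zero_iff.mpr fun α _ =>
      Nat.cast_ne_zero.mpr (Nat.factorial_ne_zero _)
    have hGne : G ≠ 0 := Finset.prod_ne_zero_iff.mpr fun α _ =>
      Nat.cast_ne_zero.mpr (Nat.factorial_ne_zero _)
    rw [hNum, hDen, hdprod, hSum, Finset.prod_pow, Finset.prod_div_distrib, hF, hG, hγ2]
    have hR : (∏ α ∈ Finset.range γ, ((α.factorial : ℝ) / ((γ + α).factorial : ℝ))) = F / G :=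
      Finset.prod_div_distrib _ _
    rw [hR, pow_add, pow_add]
    field_simp
    ring
  refine ⟨hdet, fun hh => ?_⟩
  rw [Matrix.isUnit_iff_isUnit_det, hdet, isUnit_iff_ne_zero]
  refine mul_ne_zero (pow_ne_zero _ hh) (Finset.prod_ne_zero_iff.mpr fun α _ => ?_)
  exact div_ne_zero (Nat.cast_ne_zero.mpr (Nat.factorial_ne_zero _))
    (Nat.cast_ne_zero.mpr (Nat.factorial_ne_zero _))
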